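/- Every C^r differentiable structure (1 ≤ r ≤ ∞) on the topological space ℝ is C^r-diffeomorphic to the standard one; equivalently, if R' denotes ℝ with any C^r atlas compatible with its topology, there is a C^r isomorphism (bijective C^r map with C^r inverse) from R' to ℝ with its usual smooth structure. -/

import Mathlib

/-- A `C^r` atlas on a 1-dimensional manifold `V` (Hausdorffness not assumed):
charts are open embeddings `ℝ → V` covering `V`, with `C^r` transition maps. -/
structure OneManifoldCr (r : ℕ∞) (V : Type*) [TopologicalSpace V] where
  ι : Type
  chart : ι → ℝ → V
  openEmb : ∀ i, Topology.IsOpenEmbedding (chart i)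
  cover : ∀ x : V, ∃ i t, chart i t = x
  compat : ∀ i j, ContDiffOn ℝ r (fun t => Function.invFun (chart j) (chart i t))
    {t : ℝ | chart i t ∈ Set.range (chart j)}

variable {r : ℕ∞} {V : Type*} [TopologicalSpace V]

/-- `f : V → ℝ` is `C^r` for the atlas `A` if its read in every chart is `C^r`. -/
def OneManifoldCr.IsCrMap (A : OneManifoldCr r V) (f : V → ℝ) : Prop :=
  ∀ i, ContDiff ℝ r (f ∘ A.chart i)

/-- `f` is `C^r` on an open set `U ⊆ V` if its reads in charts are `C^r` on the
preimages of `U`. -/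
def OneManifoldCr.IsCrOn (A : OneManifoldCr r V) (f : V → ℝ) (U : Set V) : Prop :=
  ∀ i, ContDiffOn ℝ r (f ∘ A.chart i) (A.chart i ⁻¹' U)

/-- `f` has rank 1 at `x` if its derivative in some chart through `x` is nonzero. -/
def OneManifoldCr.RankOneAt (A : OneManifoldCr r V) (f : V → ℝ) (x : V) : Prop :=
  ∃ i t, A.chart i t = x ∧ deriv (f ∘ A.chart i) t ≠ 0

/-- The structure is regular if every `C^r` function defined on a neighborhood of a
point coincides, near that point, with a globally defined `C^r` function. -/
def OneManifoldCr.Regular (A : OneManifoldCr r V) : Prop :=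
  ∀ (x : V) (U : Set V) (f : V → ℝ), IsOpen U → x ∈ U → A.IsCrOn f U →
    ∃ g : V → ℝ, A.IsCrMap g ∧ ∃ W : Set V, IsOpen W ∧ x ∈ W ∧ Set.EqOn f g W

section RCUAux

open Set Function Topology Filter Real
open scoped ContDiff

namespace RCU

lemma strictMono_isOpenMap {F : ℝ → ℝ} (hm : StrictMono F) (hc : Continuous F) :
    IsOpenMap F := by
  intro U hU
  rw [isOpen_iff_mem_nhds]
  rintro _ ⟨x, hx, rfl⟩
  obtain ⟨ε, εpos, hball⟩ := Metric.isOpen_iff.1 hU x hx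
  have h1 : Set.Ioo (F (x - ε/2)) (F (x + ε/2)) ⊆ F '' U := by
    refine (intermediate_value_Ioo (by linarith) hc.continuousOn).trans
      (Set.image_mono ?_)
    intro y hy
    apply hball
    rw [Real.ball_eq_Ioo]
    exact ⟨by simp only [mem_Ioo] at hy; linarith [hy.1], by simp only [mem_Ioo] at hy; linarith [hy.2]⟩
  exact Filter.mem_of_superset
    (Ioo_mem_nhds (hm (by linarith)) (hm (by linarith))) h1

lemma invFun_contDiffOn_aux {r : ℕ∞} (hr : 1 ≤ r) {F : ℝ → ℝ} (hF : ContDiff ℝ r F)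
    (hd : ∀ t, deriv F t ≠ 0) (hm : StrictMono F) :
    ContDiffOn ℝ r (Function.invFun F) (Set.range F) := by
  have hr1 : (1 : WithTop ℕ∞) ≤ (r : WithTop ℕ∞) := by exact_mod_cast hr
  have hOE : Topology.IsOpenEmbedding F :=
    Topology.IsOpenEmbedding.of_continuous_injective_isOpenMap hF.continuous hm.injective
      (strictMono_isOpenMap hm hF.continuous)
  set P := hOE.toOpenPartialHomeomorph F with hP
  have hPcoe : (P : ℝ → ℝ) = F := hOE.toOpenPartialHomeomorph_apply F
  have hPt : P.target = Set.range F := hOE.toOpenPartialHomeomorph_target F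
  intro w hw
  have hwt : w ∈ P.target := by rw [hPt]; exact hw
  have h1 : ContDiffAt ℝ r P.symm w := by
    refine P.contDiffAt_symm_deriv (hd (P.symm w)) hwt ?_ ?_
    · rw [hPcoe]
      exact ((hF.differentiable (zero_lt_one.trans_le hr1).ne') (P.symm w)).hasDerivAt
    · rw [hPcoe]; exact hF.contDiffAt
  have hEq : Set.EqOn (Function.invFun F) P.symm P.target := by
    intro y hy
    have h2 : F (P.symm y) = y :=
      hOE.toOpenPartialHomeomorph_right_inv F (by rwa [hPt] at hy)
    conv_lhs => rw [← h2, Function.leftInverse_invFun hm.injective]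
  have h3 : ContDiffAt ℝ r (Function.invFun F) w :=
    h1.congr_of_eventuallyEq
      (Filter.eventuallyEq_of_mem (P.open_target.mem_nhds hwt) hEq)
  exact h3.contDiffWithinAt

lemma invFun_contDiffOn {r : ℕ∞} (hr : 1 ≤ r) {F : ℝ → ℝ} (hF : ContDiff ℝ r F)
    (hd : ∀ t, deriv F t ≠ 0) :
    Function.Injective F ∧ ContDiffOn ℝ r (Function.invFun F) (Set.range F) := by
  have hr1 : (1 : WithTop ℕ∞) ≤ (r : WithTop ℕ∞) := by exact_mod_cast hr
  have hsign : (∀ t, 0 < deriv F t) ∨ (∀ t, deriv F t < 0) := by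
    by_contra h
    push_neg at h
    obtain ⟨⟨t1, h1⟩, t2, h2⟩ := h
    have h1' : deriv F t1 < 0 := lt_of_le_of_ne h1 (hd t1)
    have h2' : 0 < deriv F t2 := lt_of_le_of_ne h2 (Ne.symm (hd t2))
    have : (0:ℝ) ∈ Set.Icc (deriv F t1) (deriv F t2) := ⟨h1'.le, h2'.le⟩
    obtain ⟨t, ht⟩ := intermediate_value_univ t1 t2 (hF.continuous_deriv hr1) this
    exact hd t ht
  rcases hsign with hpos | hneg
  · have hm := strictMono_of_deriv_pos hpos
    exact ⟨hm.injective, invFun_contDiffOn_aux hr hF hd hm⟩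
  · set G : ℝ → ℝ := fun x => F (-x) with hG
    have hdG : ∀ t, HasDerivAt G (deriv F (-t) * (-1)) t := fun t =>
      ((hF.differentiable (zero_lt_one.trans_le hr1).ne' (-t)).hasDerivAt).comp t (hasDerivAt_neg t)
    have hGC : ContDiff ℝ r G := hF.comp contDiff_neg
    have hdG' : ∀ t, deriv G t ≠ 0 := fun t => by
      rw [(hdG t).deriv]
      simp only [mul_neg_one, ne_eq, neg_eq_zero]
      exact hd (-t)
    have hmG : StrictMono G := strictMono_of_deriv_pos fun t => by
      rw [(hdG t).deriv]
      simpa using hneg (-t)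
    have hinj : Function.Injective F := fun a b hab => by
      have : G (-a) = G (-b) := by simp [hG, hab]
      have := hmG.injective this
      linarith [neg_injective this]
    have hrange : Set.range F = Set.range G := by
      ext y
      constructor
      · rintro ⟨t, rfl⟩; exact ⟨-t, by simp [hG]⟩
      · rintro ⟨t, rfl⟩; exact ⟨-t, rfl⟩
    have hEq : Set.EqOn (Function.invFun F) (Neg.neg ∘ Function.invFun G) (Set.range F) := by
      rintro _ ⟨t, rfl⟩
      have h1 : Function.invFun F (F t) = t := Function.leftInverse_invFun hinj t
      have h2 : Function.invFun G (G (-t)) = -t := Function.leftInverse_invFun hmG.injective (-t)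
      have h3 : G (-t) = F t := by simp [hG]
      rw [h1]
      simp only [Function.comp_apply, ← h3, h2, neg_neg]
    refine ⟨hinj, ?_⟩
    have := (invFun_contDiffOn_aux hr hGC hdG' hmG).neg
    rw [hrange]
    exact this.congr fun y hy => hEq (hrange ▸ hy)

variable (A : OneManifoldCr r ℝ)

lemma chart_cont (i : A.ι) : Continuous (A.chart i) := (A.openEmb i).continuous

lemma chart_inj (i : A.ι) : Function.Injective (A.chart i) :=
  (A.openEmb i).isEmbedding.injective

/-- A strictly increasing chart compatible with the atlas. -/
structure GoodChart where
  e : ℝ → ℝ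
  mono : StrictMono e
  emb : Topology.IsOpenEmbedding e
  fwd : ∀ j, ContDiffOn ℝ r (Function.invFun (A.chart j) ∘ e) (e ⁻¹' Set.range (A.chart j))
  bwd : ∀ j, ContDiffOn ℝ r (Function.invFun e ∘ A.chart j) (A.chart j ⁻¹' Set.range e)

lemma exists_goodChart (x : ℝ) : ∃ g : GoodChart A, x ∈ Set.range g.e := by
  obtain ⟨i, t0, ht0⟩ := A.cover x
  rcases (chart_cont A i).strictMono_of_inj (chart_inj A i) with hm | ha
  · refine ⟨⟨A.chart i, hm, A.openEmb i, fun j => ?_, fun j => ?_⟩, ⟨t0, ht0⟩⟩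
    · exact A.compat i j
    · exact A.compat j i
  · set e : ℝ → ℝ := fun t => A.chart i (-t) with he
    have hmono : StrictMono e := fun a b hab => ha (neg_lt_neg hab)
    have hemb : Topology.IsOpenEmbedding e :=
      (A.openEmb i).comp (Homeomorph.neg ℝ).isOpenEmbedding
    have hrange : Set.range e = Set.range (A.chart i) := by
      ext y
      constructor
      · rintro ⟨t, rfl⟩; exact ⟨-t, rfl⟩
      · rintro ⟨t, rfl⟩; exact ⟨-t, by simp [he]⟩
    refine ⟨⟨e, hmono, hemb, fun j => ?_, fun j => ?_⟩, ⟨-t0, by simp [he, ht0]⟩⟩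
    · have : ContDiffOn ℝ r ((fun t => Function.invFun (A.chart j) (A.chart i t)) ∘ Neg.neg)
          (Neg.neg ⁻¹' {t : ℝ | A.chart i t ∈ Set.range (A.chart j)}) :=
        (A.compat i j).comp contDiff_neg.contDiffOn (fun t ht => ht)
      exact this
    · have hEq : Set.EqOn (Function.invFun e) (Neg.neg ∘ Function.invFun (A.chart i))
          (Set.range e) := by
        rintro _ ⟨t, rfl⟩
        have h1 : Function.invFun e (e t) = t := Function.leftInverse_invFun hmono.injective t
        have h2 : Function.invFun (A.chart i) (A.chart i (-t)) = -t :=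
          Function.leftInverse_invFun (chart_inj A i) (-t)
        rw [h1]
        simp only [Function.comp_apply]
        rw [show e t = A.chart i (-t) from rfl, h2, neg_neg]
      have hset : A.chart j ⁻¹' Set.range e = {t : ℝ | A.chart j t ∈ Set.range (A.chart i)} := by
        rw [hrange]; rfl
      have base : ContDiffOn ℝ r (Neg.neg ∘ fun t => Function.invFun (A.chart i) (A.chart j t))
          {t : ℝ | A.chart j t ∈ Set.range (A.chart i)} := (A.compat j i).neg
      rw [hset]
      refine base.congr fun t ht => ?_
      have : A.chart j t ∈ Set.range e := by rw [hrange]; exact ht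
      exact hEq this

structure Bump where
  f : ℝ → ℝ
  U : Set ℝ
  K : Set ℝ
  mono : Monotone f
  nonneg : ∀ x, 0 ≤ f x
  M : ℝ
  le_M : ∀ x, f x ≤ M
  openU : IsOpen U
  strictU : StrictMonoOn f U
  locconst : ∀ y ∉ K, f =ᶠ[nhds y] (fun _ => f y)
  smooth : ∀ j, ContDiff ℝ r (f ∘ A.chart j)
  pos : ∀ j t, A.chart j t ∈ U → deriv (f ∘ A.chart j) t ≠ 0

lemma exists_bump (hr : 1 ≤ r) (x : ℝ) (W : Set ℝ) (hW : IsOpen W) (hxW : x ∈ W) :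
    ∃ b : Bump A, x ∈ b.U ∧ b.K ⊆ W := by
  classical
  have hr1 : (1 : WithTop ℕ∞) ≤ (r : WithTop ℕ∞) := by exact_mod_cast hr
  obtain ⟨g, t0, ht0⟩ := exists_goodChart A x
  set e := g.e with he
  have hVopen : IsOpen (e ⁻¹' W) := hW.preimage g.emb.continuous
  have ht0V : t0 ∈ e ⁻¹' W := by simp [Set.mem_preimage, ht0, hxW]
  obtain ⟨δ, δpos, hδ⟩ := (Metric.nhds_basis_closedBall.mem_iff).1 (hVopen.mem_nhds ht0V)
  set c : ContDiffBump t0 := ⟨δ/2, δ, by positivity, by linarith⟩ with hc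
  set G : ℝ → ℝ := fun u => ∫ s in (t0 - δ - 1)..u, c s with hG
  have hInt : ∀ a b : ℝ, IntervalIntegrable c MeasureTheory.volume a b := fun a b =>
    c.continuous.intervalIntegrable a b
  have hderivG : ∀ u, HasDerivAt G (c u) u := fun u =>
    intervalIntegral.integral_hasDerivAt_right (hInt _ _)
      (c.continuous.stronglyMeasurableAtFilter _ _) c.continuous.continuousAt
  have hderivG' : deriv G = c := funext fun u => (hderivG u).deriv
  have hGsmooth : ContDiff ℝ r G := by
    have : ContDiff ℝ ∞ G := by
      rw [contDiff_infty_iff_deriv]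
      exact ⟨fun u => (hderivG u).differentiableAt, by rw [hderivG']; exact c.contDiff⟩
    exact this.of_le (WithTop.coe_le_coe.2 le_top)
  have hGmono : Monotone G :=
    monotone_of_deriv_nonneg (fun u => (hderivG u).differentiableAt)
      (fun u => by rw [hderivG']; exact c.nonneg)
  have hGzero : ∀ u ≤ t0 - δ, G u = 0 := by
    intro u hu
    have : Set.EqOn (fun s => c s) (fun _ => (0:ℝ)) (Set.uIcc (t0 - δ - 1) u) := by
      intro s hs
      have hs' : s ≤ t0 - δ := by
        rcases Set.mem_uIcc.1 hs with h | h
        · exact le_trans h.2 hu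
        · linarith [h.2]
      exact c.zero_of_le_dist (by rw [Real.dist_eq, abs_sub_comm, abs_of_nonneg (by linarith)]; linarith)
    rw [hG]
    simp only
    rw [intervalIntegral.integral_congr this, intervalIntegral.integral_zero]
  set M : ℝ := G (t0 + δ) with hM
  have hGM : ∀ u, t0 + δ ≤ u → G u = M := by
    intro u hu
    have h0 : (∫ s in (t0 + δ)..u, c s) = 0 := by
      have : Set.EqOn (fun s => c s) (fun _ => (0:ℝ)) (Set.uIcc (t0 + δ) u) := by
        intro s hs
        have hs' : t0 + δ ≤ s := by
          rcases Set.mem_uIcc.1 hs with h | h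
          · exact h.1
          · linarith [h.1]
        exact c.zero_of_le_dist (by rw [Real.dist_eq, abs_of_nonneg (by linarith)]; linarith)
      rw [intervalIntegral.integral_congr this, intervalIntegral.integral_zero]
    have hadd := intervalIntegral.integral_add_adjacent_intervals
      (hInt (t0 - δ - 1) (t0 + δ)) (hInt (t0 + δ) u)
    rw [hG]
    simp only
    rw [← hadd, h0, add_zero]
  have hGnonneg : ∀ u, 0 ≤ G u := by
    intro u
    rcases le_or_gt u (t0 - δ) with h | h
    · rw [hGzero u h]
    · rw [← hGzero (t0 - δ) le_rfl]; exact hGmono h.le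
  have hGleM : ∀ u, G u ≤ M := by
    intro u
    rcases le_or_gt u (t0 + δ) with h | h
    · exact hGmono h
    · rw [hGM u h.le]
  have hGstrict : StrictMonoOn G (Metric.ball t0 δ) := by
    apply strictMonoOn_of_deriv_pos (convex_ball t0 δ) hGsmooth.continuous.continuousOn
    intro u hu
    rw [Metric.isOpen_ball.interior_eq] at hu
    rw [hderivG']
    exact c.pos_of_mem_ball hu
  set p : ℝ := e (t0 - δ) with hp
  set q : ℝ := e (t0 + δ) with hq
  have hpq : p ≤ q := (g.mono.le_iff_le).2 (by linarith)
  set σ : ℝ → ℝ := Function.invFun e with hσ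
  have hσe : ∀ t, σ (e t) = t := Function.leftInverse_invFun g.mono.injective
  have heσ : ∀ y ∈ Set.range e, e (σ y) = y := fun y hy => Function.invFun_eq hy
  have hσp : σ p = t0 - δ := hσe _
  have hσq : σ q = t0 + δ := hσe _
  have hIcc : Set.Icc p q ⊆ Set.range e := by
    have h1 : IsPreconnected (Set.range e) := by
      rw [← Set.image_univ]
      exact isPreconnected_univ.image e g.emb.continuous.continuousOn
    exact h1.ordConnected.out ⟨t0 - δ, rfl⟩ ⟨t0 + δ, rfl⟩
  have hσmono : ∀ y ∈ Set.range e, ∀ z ∈ Set.range e, y ≤ z → σ y ≤ σ z := by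
    rintro _ ⟨a, rfl⟩ _ ⟨b, rfl⟩ hab
    rw [hσe, hσe]
    exact (g.mono.le_iff_le).1 hab
  set cl : ℝ → ℝ := fun y => max p (min y q) with hcl
  have hclmem : ∀ y, cl y ∈ Set.Icc p q := fun y =>
    ⟨le_max_left _ _, max_le hpq (min_le_right _ _)⟩
  have hclmono : Monotone cl := fun a b hab =>
    max_le_max le_rfl (min_le_min hab le_rfl)
  have hclval_lo : ∀ w : ℝ, w ≤ p → cl w = p := by
    intro w hw
    rw [hcl]
    simp only
    rw [min_eq_left (le_trans hw hpq), max_eq_left hw]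
  have hclval_hi : ∀ w : ℝ, q ≤ w → cl w = q := by
    intro w hw
    rw [hcl]
    simp only
    rw [min_eq_right hw, max_eq_right hpq]
  have hclval_mid : ∀ w : ℝ, p ≤ w → w ≤ q → cl w = w := by
    intro w h1 h2
    rw [hcl]
    simp only
    rw [min_eq_left h2, max_eq_right h1]
  set f : ℝ → ℝ := fun y => G (σ (cl y)) with hfdef
  have hflo : ∀ w : ℝ, w ≤ p → f w = 0 := by
    intro w hw
    show G (σ (cl w)) = 0
    rw [hclval_lo w hw, hσp, hGzero _ le_rfl]
  have hfhi : ∀ w : ℝ, q ≤ w → f w = M := by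
    intro w hw
    show G (σ (cl w)) = M
    rw [hclval_hi w hw, hσq, hGM _ le_rfl]
  have k1 : ∀ y ∈ Set.range e, f y = G (σ y) := by
    rintro _ ⟨u, rfl⟩
    show G (σ (cl (e u))) = G (σ (e u))
    rw [hσe]
    rcases le_or_gt u (t0 - δ) with h | h
    · have h1 : e u ≤ p := g.mono.le_iff_le.2 h
      rw [hclval_lo _ h1, hσp, hGzero _ le_rfl, hGzero u h]
    · rcases le_or_gt (t0 + δ) u with h2 | h2
      · have h1 : q ≤ e u := g.mono.le_iff_le.2 h2
        rw [hclval_hi _ h1, hσq, hGM _ le_rfl, hGM u h2]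
      · rw [hclval_mid _ (g.mono.le_iff_le.2 h.le) (g.mono.le_iff_le.2 h2.le), hσe]
  have hfmono : Monotone f := by
    intro a b hab
    exact hGmono (hσmono _ (hIcc (hclmem a)) _ (hIcc (hclmem b)) (hclmono hab))
  set U : Set ℝ := e '' Metric.ball t0 δ with hU
  have hUopen : IsOpen U := g.emb.isOpenMap _ Metric.isOpen_ball
  have hxU : x ∈ U := ⟨t0, Metric.mem_ball_self δpos, ht0⟩
  have hUrange : U ⊆ Set.range e := Set.image_subset_range _ _
  have hstrictU : StrictMonoOn f U := by
    rintro y hy z hz hyz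
    obtain ⟨u, hu, rfl⟩ := hy
    obtain ⟨v, hv, rfl⟩ := hz
    rw [k1 _ ⟨u, rfl⟩, k1 _ ⟨v, rfl⟩, hσe, hσe]
    exact hGstrict hu hv (g.mono.lt_iff_lt.1 hyz)
  have hlocconst : ∀ y ∉ Set.Icc p q, f =ᶠ[nhds y] (fun _ => f y) := by
    intro y hy
    rw [Set.mem_Icc] at hy
    push_neg at hy
    rcases lt_or_ge y p with h | h
    · refine Filter.eventuallyEq_of_mem (Iio_mem_nhds h) fun z hz => ?_
      have hz' : z < p := hz
      rw [hflo z hz'.le, hflo y h.le]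
    · have h2 : q < y := hy h
      refine Filter.eventuallyEq_of_mem (Ioi_mem_nhds h2) fun z hz => ?_
      have hz' : q < z := hz
      rw [hfhi z hz'.le, hfhi y h2.le]
  have hKW : Set.Icc p q ⊆ W := by
    intro z hz
    have hz' : z ∈ Set.range e := hIcc hz
    have h1 : t0 - δ ≤ σ z := by
      have := hσmono p ⟨t0 - δ, rfl⟩ z hz' hz.1
      rwa [hσp] at this
    have h2 : σ z ≤ t0 + δ := by
      have := hσmono z hz' q ⟨t0 + δ, rfl⟩ hz.2
      rwa [hσq] at this
    have hmem : σ z ∈ Metric.closedBall t0 δ := by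
      rw [Real.closedBall_eq_Icc]; exact ⟨h1, h2⟩
    have := hδ hmem
    rwa [Set.mem_preimage, heσ z hz'] at this
  have hsmooth : ∀ j, ContDiff ℝ r (f ∘ A.chart j) := by
    intro j
    rw [contDiff_iff_contDiffAt]
    intro s
    by_cases hs : A.chart j s ∈ Set.range e
    · have hOopen : IsOpen (A.chart j ⁻¹' Set.range e) :=
        g.emb.isOpen_range.preimage (chart_cont A j)
      have hbase : ContDiffAt ℝ r (σ ∘ A.chart j) s :=
        (g.bwd j).contDiffAt (hOopen.mem_nhds hs)
      have hcomp : ContDiffAt ℝ r (G ∘ (σ ∘ A.chart j)) s :=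
        hGsmooth.contDiffAt.comp s hbase
      refine hcomp.congr_of_eventuallyEq ?_
      exact Filter.eventuallyEq_of_mem (hOopen.mem_nhds hs) fun t ht => k1 _ ht
    · have hs' : A.chart j s ∉ Set.Icc p q := fun h => hs (hIcc h)
      rw [Set.mem_Icc] at hs'
      push_neg at hs'
      rcases lt_or_ge (A.chart j s) p with h | h
      · have hmem : A.chart j ⁻¹' Set.Iio p ∈ nhds s :=
          (isOpen_Iio.preimage (chart_cont A j)).mem_nhds h
        refine (contDiffAt_const (c := (0:ℝ))).congr_of_eventuallyEq
          (Filter.eventuallyEq_of_mem hmem fun t ht => ?_)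
        have ht' : A.chart j t < p := ht
        exact hflo _ ht'.le
      · have h2 : q < A.chart j s := hs' h
        have hmem : A.chart j ⁻¹' Set.Ioi q ∈ nhds s :=
          (isOpen_Ioi.preimage (chart_cont A j)).mem_nhds h2
        refine (contDiffAt_const (c := M)).congr_of_eventuallyEq
          (Filter.eventuallyEq_of_mem hmem fun t ht => ?_)
        have ht' : q < A.chart j t := ht
        exact hfhi _ ht'.le
  have hpos : ∀ j t, A.chart j t ∈ U → deriv (f ∘ A.chart j) t ≠ 0 := by
    intro j t ht
    have htr : A.chart j t ∈ Set.range e := hUrange ht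
    have hOopen : IsOpen (A.chart j ⁻¹' Set.range e) :=
      g.emb.isOpen_range.preimage (chart_cont A j)
    set τ : ℝ → ℝ := σ ∘ A.chart j with hτ
    have hτc : ContDiffAt ℝ r τ t := (g.bwd j).contDiffAt (hOopen.mem_nhds htr)
    have hτd : DifferentiableAt ℝ τ t := hτc.differentiableAt (zero_lt_one.trans_le hr1).ne'
    have hcongr : (f ∘ A.chart j) =ᶠ[nhds t] (G ∘ τ) :=
      Filter.eventuallyEq_of_mem (hOopen.mem_nhds htr) fun s hs => k1 _ hs
    have hderiv1 : deriv (f ∘ A.chart j) t = deriv (G ∘ τ) t := hcongr.deriv_eq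
    have hderiv2 : deriv (G ∘ τ) t = c (τ t) * deriv τ t := by
      rw [deriv_comp t (hderivG (τ t)).differentiableAt hτd, hderivG']
    obtain ⟨u, hu, hue⟩ := ht
    have hτt : τ t = u := by
      show σ (A.chart j t) = u
      rw [← hue]
      exact hσe u
    have hcpos : 0 < c (τ t) := by rw [hτt]; exact c.pos_of_mem_ball hu
    have hDopen : IsOpen (e ⁻¹' Set.range (A.chart j)) :=
      (A.openEmb j).isOpen_range.preimage g.emb.continuous
    set θ : ℝ → ℝ := Function.invFun (A.chart j) ∘ e with hθ
    have hτtD : τ t ∈ e ⁻¹' Set.range (A.chart j) := by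
      rw [Set.mem_preimage]
      have h1 : e (τ t) = A.chart j t := heσ _ htr
      rw [h1]
      exact ⟨t, rfl⟩
    have hθd : DifferentiableAt ℝ θ (τ t) :=
      ((g.fwd j).contDiffAt (hDopen.mem_nhds hτtD)).differentiableAt (zero_lt_one.trans_le hr1).ne'
    have hθτ : (θ ∘ τ) =ᶠ[nhds t] id := by
      refine Filter.eventuallyEq_of_mem (hOopen.mem_nhds htr) fun s hs => ?_
      have hs' : A.chart j s ∈ Set.range e := hs
      show θ (σ (A.chart j s)) = s
      show Function.invFun (A.chart j) (e (σ (A.chart j s))) = s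
      rw [heσ _ hs']
      exact Function.leftInverse_invFun (chart_inj A j) s
    have hone : deriv θ (τ t) * deriv τ t = 1 := by
      have h1 : deriv (θ ∘ τ) t = 1 := by rw [hθτ.deriv_eq]; exact deriv_id t
      rwa [deriv_comp t hθd hτd] at h1
    have hτne : deriv τ t ≠ 0 := by
      intro hzero
      rw [hzero, mul_zero] at hone
      exact zero_ne_one hone
    rw [hderiv1, hderiv2]
    exact mul_ne_zero (ne_of_gt hcpos) hτne
  exact ⟨⟨f, U, Set.Icc p q, hfmono, fun y => hGnonneg _, M, fun y => hGleM _, hUopen,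
    hstrictU, hlocconst, hsmooth, hpos⟩, hxU, hKW⟩

lemma deriv_nonneg_of_monotone {f : ℝ → ℝ} (hf : Monotone f) (x : ℝ) : 0 ≤ deriv f x := by
  by_cases hd : DifferentiableAt ℝ f x
  · have h1 := hasDerivAt_iff_tendsto_slope.1 hd.hasDerivAt
    have h2 : Tendsto (slope f x) (nhdsWithin x (Set.Ioi x)) (nhds (deriv f x)) :=
      h1.mono_left (nhdsWithin_mono x fun y hy => Set.mem_compl_singleton_iff.2 (ne_of_gt hy))
    refine ge_of_tendsto h2 ?_
    filter_upwards [self_mem_nhdsWithin] with y hy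
    have hxy : x < y := hy
    rw [slope_def_field]
    exact div_nonneg (sub_nonneg.2 (hf hxy.le)) (sub_nonneg.2 hxy.le)
  · rw [deriv_zero_of_not_differentiableAt hd]

lemma deriv_nonpos_of_antitone {f : ℝ → ℝ} (hf : Antitone f) (x : ℝ) : deriv f x ≤ 0 := by
  have h1 : Monotone (fun y => -f y) := fun u v huv => neg_le_neg (hf huv)
  have h2 := deriv_nonneg_of_monotone h1 x
  rw [deriv.fun_neg] at h2
  linarith

lemma eq_of_locconst {f : ℝ → ℝ} {K s : Set ℝ} (hf : ∀ y ∉ K, f =ᶠ[nhds y] fun _ => f y)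
    (hs : IsPreconnected s) (hdisj : ∀ y ∈ s, y ∉ K) {x z : ℝ} (hx : x ∈ s) (hz : z ∈ s) :
    f z = f x := by
  by_contra hne
  have hmemint : ∀ y ∈ s, y ∈ interior {w | f w = f y} := by
    intro y hy
    exact mem_interior_iff_mem_nhds.2 (hf y (hdisj y hy))
  set u := interior {w | f w = f x} with hu
  set v := ⋃ (y : ℝ) (_ : f y ≠ f x), interior {w | f w = f y} with hv
  have hsub : s ⊆ u ∪ v := by
    intro y hy
    by_cases h : f y = f x
    · left
      have := hmemint y hy
      rwa [h] at this
    · right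
      exact Set.mem_iUnion₂.2 ⟨y, h, hmemint y hy⟩
  obtain ⟨ξ, hξs, hξu, hξv⟩ := hs u v isOpen_interior
    (isOpen_iUnion fun y => isOpen_iUnion fun _ => isOpen_interior) hsub
    ⟨x, hx, hmemint x hx⟩ ⟨z, hz, Set.mem_iUnion₂.2 ⟨z, hne, hmemint z hz⟩⟩
  have h1 : ξ ∈ {w | f w = f x} := interior_subset hξu
  have h1' : f ξ = f x := h1
  obtain ⟨y, hy, hξy⟩ := Set.mem_iUnion₂.1 hξv
  have h2 : ξ ∈ {w | f w = f y} := interior_subset hξy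
  have h2' : f ξ = f y := h2
  exact hy (by rw [← h2', h1'])

end RCU

end RCUAux

open RCU
open Set Function Topology Filter Real

/-- Every `C^r` differentiable structure on the topological space `ℝ` is
`C^r`-diffeomorphic to the standard one: there is a bijection `ψ : ℝ → ℝ` which is
`C^r` read in the charts of the given structure, and whose inverse is `C^r` as a map
from standard `ℝ` back to the structured `ℝ`. -/
theorem real_cr_structure_unique {r : ℕ∞} (hr : 1 ≤ r) (A : OneManifoldCr r ℝ) :
    ∃ ψ : ℝ → ℝ, Function.Bijective ψ ∧
      (∀ i, ContDiff ℝ r (ψ ∘ A.chart i)) ∧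
      (∀ i, ContDiffOn ℝ r (Function.invFun (A.chart i) ∘ Function.invFun ψ)
        (ψ '' Set.range (A.chart i))) := by
  classical
  have hr1 : (1 : WithTop ℕ∞) ≤ (r : WithTop ℕ∞) := by exact_mod_cast hr
  -- choose bumps
  have H : ∀ m : ℤ, ∀ x : ℝ, ∃ b : Bump A, x ∈ b.U ∧
      (x ∈ Set.Icc (m:ℝ) (m+1) → b.K ⊆ Set.Ioo ((m:ℝ)-1) (m+2)) := by
    intro m x
    by_cases hx : x ∈ Set.Icc (m:ℝ) (m+1)
    · obtain ⟨b, h1, h2⟩ := exists_bump A hr x (Set.Ioo ((m:ℝ)-1) (m+2)) isOpen_Ioo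
        ⟨by linarith [hx.1], by linarith [hx.2]⟩
      exact ⟨b, h1, fun _ => h2⟩
    · obtain ⟨b, h1, _⟩ := exists_bump A hr x Set.univ isOpen_univ trivial
      exact ⟨b, h1, fun h => absurd h hx⟩
  choose bu hbU hbK using H
  -- finite subcovers of [m, m+1]
  have HC : ∀ m : ℤ, ∃ t : Finset ↥(Set.Icc (m:ℝ) (m+1)),
      Set.Icc (m:ℝ) (m+1) ⊆ ⋃ x ∈ t, (bu m x.val).U := by
    intro m
    obtain ⟨t, ht⟩ := isCompact_Icc.elim_finite_subcover
      (fun x : ↥(Set.Icc (m:ℝ) (m+1)) => (bu m x.val).U)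
      (fun x => (bu m x.val).openU)
      (fun z hz => Set.mem_iUnion.2 ⟨⟨z, hz⟩, hbU m z⟩)
    exact ⟨t, ht⟩
  choose t ht using HC
  -- global countable family
  set B : (Σ m : ℤ, {y : ↥(Set.Icc (m:ℝ) (m+1)) // y ∈ t m}) → Bump A :=
    fun n => bu n.1 n.2.val.val with hB
  have hBK : ∀ n, (B n).K ⊆ Set.Ioo ((n.1:ℝ)-1) (n.1+2) :=
    fun n => hbK n.1 n.2.val.val n.2.val.property
  have hcov : ∀ z : ℝ, ∃ n, n.1 = ⌊z⌋ ∧ z ∈ (B n).U := by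
    intro z
    have hz : z ∈ Set.Icc ((⌊z⌋:ℤ):ℝ) ((⌊z⌋:ℝ)+1) := ⟨Int.floor_le z, (Int.lt_floor_add_one z).le⟩
    have := ht ⌊z⌋ hz
    rw [Set.mem_iUnion₂] at this
    obtain ⟨x, hxt, hxU⟩ := this
    exact ⟨⟨⌊z⌋, ⟨x, hxt⟩⟩, rfl, hxU⟩
  obtain ⟨inj, hinj⟩ := exists_injective_nat (Σ m : ℤ, {y : ↥(Set.Icc (m:ℝ) (m+1)) // y ∈ t m})
  set w : (Σ m : ℤ, {y : ↥(Set.Icc (m:ℝ) (m+1)) // y ∈ t m}) → ℝ :=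
    fun n => (1/2)^(inj n) * (1 / (1 + (B n).M)) with hw
  have hM0 : ∀ n, 0 ≤ (B n).M := fun n => le_trans ((B n).nonneg 0) ((B n).le_M 0)
  have hw_pos : ∀ n, 0 < w n := fun n =>
    mul_pos (pow_pos (by norm_num) _) (by have := hM0 n; positivity)
  have hbound : ∀ n x, w n * (B n).f x ≤ (1/2)^(inj n) := by
    intro n x
    have h1 : w n * (B n).f x ≤ w n * (B n).M :=
      mul_le_mul_of_nonneg_left ((B n).le_M x) (hw_pos n).le
    have h2 : w n * (B n).M = (1/2)^(inj n) * ((B n).M / (1 + (B n).M)) := by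
      rw [hw]; ring
    have h3 : (B n).M / (1 + (B n).M) ≤ 1 := by
      rw [div_le_one (by linarith [hM0 n])]; linarith [hM0 n]
    calc w n * (B n).f x ≤ w n * (B n).M := h1
      _ = (1/2)^(inj n) * ((B n).M / (1 + (B n).M)) := h2
      _ ≤ (1/2)^(inj n) * 1 := mul_le_mul_of_nonneg_left h3 (by positivity)
      _ = (1/2)^(inj n) := mul_one _
  have hgeom : Summable (fun n => ((1:ℝ)/2)^(inj n)) :=
    summable_geometric_two.comp_injective hinj
  have htermnn : ∀ n (x : ℝ), 0 ≤ w n * (B n).f x := fun n x =>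
    mul_nonneg (hw_pos n).le ((B n).nonneg x)
  have hsum : ∀ x : ℝ, Summable (fun n => w n * (B n).f x) := fun x =>
    Summable.of_nonneg_of_le (fun n => htermnn n x) (fun n => hbound n x) hgeom
  set ψ0 : ℝ → ℝ := fun x => ∑' n, w n * (B n).f x with hψ0
  have hψ0mono : Monotone ψ0 := fun x y hxy =>
    Summable.tsum_le_tsum (fun n => mul_le_mul_of_nonneg_left ((B n).mono hxy) (hw_pos n).le)
      (hsum x) (hsum y)
  have hψ0strict : StrictMono ψ0 := by
    intro x y hxy
    obtain ⟨n, -, hzU⟩ := hcov ((x + y)/2)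
    obtain ⟨ε, εpos, hball⟩ := Metric.isOpen_iff.1 (B n).openU _ hzU
    set z := (x + y)/2 with hz
    set v := z + (min ε (y - z))/2 with hv
    have hyz : 0 < y - z := by rw [hz]; linarith
    have hzv : z < v := by
      rw [hv]
      have : 0 < min ε (y - z) := lt_min εpos hyz
      linarith
    have hvy : v < y := by
      rw [hv]
      have h1 : min ε (y - z) ≤ y - z := min_le_right _ _
      linarith
    have hvU : v ∈ (B n).U := by
      apply hball
      rw [Metric.mem_ball, Real.dist_eq, hv]
      have h1 : min ε (y - z) ≤ ε := min_le_left _ _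
      have h2 : 0 < min ε (y - z) := lt_min εpos hyz
      rw [abs_of_nonneg (by linarith)]
      linarith
    have hxz : x ≤ z := by rw [hz]; linarith
    have hkey : (B n).f x < (B n).f y :=
      lt_of_le_of_lt ((B n).mono hxz)
        (lt_of_lt_of_le ((B n).strictU hzU hvU hzv) ((B n).mono hvy.le))
    exact Summable.tsum_lt_tsum
      (fun k => mul_le_mul_of_nonneg_left ((B k).mono hxy.le) (hw_pos k).le)
      (mul_lt_mul_of_pos_left hkey (hw_pos n)) (hsum x) (hsum y)
  -- local finiteness representation
  have hconstK : ∀ (n) (x : ℝ), n.1 ∉ Finset.Icc (⌊x⌋ - 2) (⌊x⌋ + 2) →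
      ∀ z ∈ Metric.ball x (1/2:ℝ), (B n).f z = (B n).f x := by
    intro n x hn z hz
    have hdisj : ∀ y ∈ Metric.ball x (1/2:ℝ), y ∉ (B n).K := by
      intro y hy hyK
      have h1 := hBK n hyK
      rw [Metric.mem_ball, Real.dist_eq, abs_lt] at hy
      have h2 : ((⌊x⌋:ℤ):ℝ) ≤ x := Int.floor_le x
      have h3 : x < (⌊x⌋:ℝ) + 1 := Int.lt_floor_add_one x
      apply hn
      rw [Finset.mem_Icc]
      constructor
      · by_contra hcon
        push_neg at hcon
        have hc2 : n.1 ≤ ⌊x⌋ - 3 := by omega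
        have hc3 : ((n.1:ℤ):ℝ) ≤ ((⌊x⌋ - 3 : ℤ):ℝ) := by exact_mod_cast hc2
        push_cast at hc3
        have h4 := h1.2
        have h5 := hy.1
        linarith
      · by_contra hcon
        push_neg at hcon
        have hc2 : ⌊x⌋ + 3 ≤ n.1 := by omega
        have hc3 : ((⌊x⌋ + 3 : ℤ):ℝ) ≤ ((n.1:ℤ):ℝ) := by exact_mod_cast hc2
        push_cast at hc3
        have h4 := h1.1
        have h5 := hy.2
        linarith
    exact eq_of_locconst (B n).locconst (convex_ball x (1/2:ℝ)).isPreconnected hdisj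
      (Metric.mem_ball_self (by norm_num)) hz
  have hloc : ∀ x : ℝ, ∃ (S : Finset (Σ m : ℤ, {y : ↥(Set.Icc (m:ℝ) (m+1)) // y ∈ t m})) (C : ℝ),
      (∀ z ∈ Metric.ball x (1/2:ℝ), ψ0 z = (∑ n ∈ S, w n * (B n).f z) + C) ∧
      (∀ z ∈ Metric.ball x (1/2:ℝ), ∃ n ∈ S, z ∈ (B n).U) := by
    intro x
    set S := (Finset.Icc (⌊x⌋ - 2) (⌊x⌋ + 2)).sigma
      (fun m => (t m).attach) with hS
    have hmemS : ∀ n, n ∈ S ↔ n.1 ∈ Finset.Icc (⌊x⌋ - 2) (⌊x⌋ + 2) := by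
      intro n
      rw [hS, Finset.mem_sigma]
      exact ⟨fun h => h.1, fun h => ⟨h, Finset.mem_attach _ _⟩⟩
    refine ⟨S, ∑' (n : ↑((S : Set _))ᶜ), w n.val * (B n.val).f x, ?_, ?_⟩
    · intro z hz
      have e1 := Summable.sum_add_tsum_compl (s := S) (f := fun n => w n * (B n).f z) (hsum z)
      have e2 : ∑' (n : ↑((S : Set _))ᶜ), w n.val * (B n.val).f z
          = ∑' (n : ↑((S : Set _))ᶜ), w n.val * (B n.val).f x := by
        apply tsum_congr
        rintro ⟨n, hn⟩
        have hn' : n.1 ∉ Finset.Icc (⌊x⌋ - 2) (⌊x⌋ + 2) := by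
          intro hcon
          exact hn (Finset.mem_coe.2 ((hmemS n).2 hcon))
        simp only
        rw [hconstK n x hn' z hz]
      show (∑' n, w n * (B n).f z) = _
      rw [← e1, e2]
    · intro z hz
      obtain ⟨n, hn1, hnU⟩ := hcov z
      refine ⟨n, ?_, hnU⟩
      rw [hmemS n, hn1, Finset.mem_Icc]
      rw [Metric.mem_ball, Real.dist_eq, abs_lt] at hz
      have h2 : ((⌊x⌋:ℤ):ℝ) ≤ x := Int.floor_le x
      have h3 : x < (⌊x⌋:ℝ) + 1 := Int.lt_floor_add_one x
      have h4 : ((⌊z⌋:ℤ):ℝ) ≤ z := Int.floor_le z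
      have h5 : z < (⌊z⌋:ℝ) + 1 := Int.lt_floor_add_one z
      constructor
      · by_contra hcon
        push_neg at hcon
        have hc2 : ⌊z⌋ ≤ ⌊x⌋ - 3 := by omega
        have hc3 : ((⌊z⌋:ℤ):ℝ) ≤ ((⌊x⌋ - 3 : ℤ):ℝ) := by exact_mod_cast hc2
        push_cast at hc3
        linarith [hz.1]
      · by_contra hcon
        push_neg at hcon
        have hc2 : ⌊x⌋ + 3 ≤ ⌊z⌋ := by omega
        have hc3 : ((⌊x⌋ + 3 : ℤ):ℝ) ≤ ((⌊z⌋:ℤ):ℝ) := by exact_mod_cast hc2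
        push_cast at hc3
        linarith [hz.2]
  -- smoothness in charts
  have hψ0smooth : ∀ j, ContDiff ℝ r (ψ0 ∘ A.chart j) := by
    intro j
    rw [contDiff_iff_contDiffAt]
    intro s
    obtain ⟨S, C, hrep, -⟩ := hloc (A.chart j s)
    have hmem : A.chart j ⁻¹' Metric.ball (A.chart j s) (1/2:ℝ) ∈ nhds s :=
      (Metric.isOpen_ball.preimage (chart_cont A j)).mem_nhds
        (Metric.mem_ball_self (by norm_num))
    have hsm : ContDiff ℝ r (fun s' => (∑ n ∈ S, w n * ((B n).f ∘ A.chart j) s') + C) :=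
      (ContDiff.sum fun n _ => contDiff_const.mul ((B n).smooth j)).add contDiff_const
    refine hsm.contDiffAt.congr_of_eventuallyEq ?_
    refine Filter.eventuallyEq_of_mem hmem fun s' hs' => ?_
    exact hrep _ hs'
  -- nonvanishing derivative in charts
  have hψ0deriv : ∀ j s, deriv (ψ0 ∘ A.chart j) s ≠ 0 := by
    intro j s
    obtain ⟨S, C, hrep, hSU⟩ := hloc (A.chart j s)
    have hmem : A.chart j ⁻¹' Metric.ball (A.chart j s) (1/2:ℝ) ∈ nhds s :=
      (Metric.isOpen_ball.preimage (chart_cont A j)).mem_nhds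
        (Metric.mem_ball_self (by norm_num))
    have hFe : (ψ0 ∘ A.chart j) =ᶠ[nhds s]
        (fun s' => (∑ n ∈ S, w n * ((B n).f ∘ A.chart j) s') + C) :=
      Filter.eventuallyEq_of_mem hmem fun s' hs' => hrep _ hs'
    have hdiff : ∀ n, DifferentiableAt ℝ ((B n).f ∘ A.chart j) s := fun n =>
      ((B n).smooth j).differentiable (zero_lt_one.trans_le hr1).ne' s
    have hder : deriv (ψ0 ∘ A.chart j) s = ∑ n ∈ S, w n * deriv ((B n).f ∘ A.chart j) s := by
      rw [hFe.deriv_eq, deriv_add_const,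
        deriv_fun_sum (fun n _ => (hdiff n).const_mul (w n))]
      exact Finset.sum_congr rfl fun n _ => deriv_const_mul (w n) (hdiff n)
    obtain ⟨n0, hn0S, hn0U⟩ := hSU (A.chart j s) (Metric.mem_ball_self (by norm_num))
    have hn0 := (B n0).pos j s hn0U
    rcases (chart_cont A j).strictMono_of_inj (chart_inj A j) with hmono | hanti
    · have hnn : ∀ n, 0 ≤ deriv ((B n).f ∘ A.chart j) s := fun n =>
        deriv_nonneg_of_monotone ((B n).mono.comp hmono.monotone) s
      have hpos0 : 0 < w n0 * deriv ((B n0).f ∘ A.chart j) s :=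
        mul_pos (hw_pos n0) (lt_of_le_of_ne (hnn n0) (Ne.symm hn0))
      have : 0 < ∑ n ∈ S, w n * deriv ((B n).f ∘ A.chart j) s :=
        Finset.sum_pos' (fun n _ => mul_nonneg (hw_pos n).le (hnn n)) ⟨n0, hn0S, hpos0⟩
      rw [hder]
      exact ne_of_gt this
    · have hnn : ∀ n, deriv ((B n).f ∘ A.chart j) s ≤ 0 := fun n =>
        deriv_nonpos_of_antitone ((B n).mono.comp_antitone hanti.antitone) s
      have hneg0 : w n0 * deriv ((B n0).f ∘ A.chart j) s < 0 :=
        mul_neg_of_pos_of_neg (hw_pos n0) (lt_of_le_of_ne (hnn n0) hn0)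
      have h2 : 0 < ∑ n ∈ S, -(w n * deriv ((B n).f ∘ A.chart j) s) :=
        Finset.sum_pos' (fun n _ => neg_nonneg.2 (mul_nonpos_of_nonneg_of_nonpos (hw_pos n).le (hnn n)))
          ⟨n0, hn0S, by linarith⟩
      rw [Finset.sum_neg_distrib] at h2
      rw [hder]
      linarith
  -- continuity of ψ0
  have hψ0cont : Continuous ψ0 := by
    rw [continuous_iff_continuousAt]
    intro x
    obtain ⟨j, s, hjs⟩ := A.cover x
    set P := (A.openEmb j).toOpenPartialHomeomorph (A.chart j) with hP
    have hxT : x ∈ P.target := by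
      rw [(A.openEmb j).toOpenPartialHomeomorph_target]
      exact ⟨s, hjs⟩
    have hEq : ψ0 =ᶠ[nhds x] ((ψ0 ∘ A.chart j) ∘ P.symm) := by
      refine Filter.eventuallyEq_of_mem (P.open_target.mem_nhds hxT) fun y hy => ?_
      have : A.chart j (P.symm y) = y := by
        have := (A.openEmb j).toOpenPartialHomeomorph_right_inv (A.chart j)
          (x := y) (by rwa [(A.openEmb j).toOpenPartialHomeomorph_target] at hy)
        exact this
      simp only [Function.comp_apply, this]
    have hc : ContinuousAt ((ψ0 ∘ A.chart j) ∘ P.symm) x := by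
      apply ContinuousAt.comp
      · exact (hψ0smooth j).continuous.continuousAt
      · exact P.symm.continuousAt (by rwa [OpenPartialHomeomorph.symm_source])
    exact hc.congr hEq.symm
  -- bounds
  have hMtot : Summable (fun n => w n * (B n).M) :=
    Summable.of_nonneg_of_le (fun n => mul_nonneg (hw_pos n).le (hM0 n))
      (fun n => by
        have := hbound n 0
        calc w n * (B n).M = (1/2)^(inj n) * ((B n).M / (1 + (B n).M)) := by rw [hw]; ring
          _ ≤ (1/2)^(inj n) * 1 := by
              apply mul_le_mul_of_nonneg_left _ (by positivity)
              rw [div_le_one (by linarith [hM0 n])]; linarith [hM0 n]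
          _ = (1/2)^(inj n) := mul_one _) hgeom
  have hψ0ub : ∀ x, ψ0 x ≤ ∑' n, w n * (B n).M := fun x =>
    Summable.tsum_le_tsum (fun n => mul_le_mul_of_nonneg_left ((B n).le_M x) (hw_pos n).le)
      (hsum x) hMtot
  have hψ0lb : ∀ x, 0 ≤ ψ0 x := fun x => tsum_nonneg (fun n => htermnn n x)
  have hbddA : BddAbove (Set.range ψ0) := ⟨∑' n, w n * (B n).M, by
    rintro _ ⟨x, rfl⟩; exact hψ0ub x⟩
  have hbddB : BddBelow (Set.range ψ0) := ⟨0, by rintro _ ⟨x, rfl⟩; exact hψ0lb x⟩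
  set a := sInf (Set.range ψ0) with ha
  set b := sSup (Set.range ψ0) with hb
  have hax : ∀ x, a < ψ0 x := fun x =>
    lt_of_le_of_lt (csInf_le hbddB ⟨x - 1, rfl⟩) (hψ0strict (by linarith))
  have hxb : ∀ x, ψ0 x < b := fun x =>
    lt_of_lt_of_le (hψ0strict (show x < x + 1 by linarith)) (le_csSup hbddA ⟨x + 1, rfl⟩)
  have hmem0 : ∀ x, ψ0 x ∈ Set.Ioo a b := fun x => ⟨hax x, hxb x⟩
  have hab : a < b := lt_trans (hax 0) (hxb 0)
  have hrange : Set.range ψ0 = Set.Ioo a b := by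
    apply Set.Subset.antisymm
    · rintro _ ⟨x, rfl⟩; exact hmem0 x
    · rintro y ⟨hy1, hy2⟩
      have hne : (Set.range ψ0).Nonempty := ⟨ψ0 0, 0, rfl⟩
      have h1 : ∃ x1, ψ0 x1 < y := by
        by_contra hcon
        push_neg at hcon
        exact absurd (le_csInf hne (by rintro _ ⟨x, rfl⟩; exact hcon x)) (not_le.2 hy1)
      have h2 : ∃ x2, y < ψ0 x2 := by
        by_contra hcon
        push_neg at hcon
        exact absurd (csSup_le hne (by rintro _ ⟨x, rfl⟩; exact hcon x)) (not_le.2 hy2)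
      obtain ⟨x1, hx1⟩ := h1
      obtain ⟨x2, hx2⟩ := h2
      have hx12 : x1 ≤ x2 := by
        by_contra hcon
        push_neg at hcon
        exact absurd (hψ0strict hcon) (by linarith)
      have := intermediate_value_Ioo hx12 hψ0cont.continuousOn (a := x1) (b := x2)
        ⟨hx1, hx2⟩
      obtain ⟨x, -, hx⟩ := this
      exact ⟨x, hx⟩
  -- the final diffeomorphism
  set k := π / (b - a) with hk
  have hkpos : 0 < k := div_pos Real.pi_pos (by linarith)
  set α : ℝ → ℝ := fun y => k * (y - a) - π/2 with hα
  have hαmem : ∀ y ∈ Set.Ioo a b, α y ∈ Set.Ioo (-(π/2)) (π/2) := by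
    rintro y ⟨hy1, hy2⟩
    have h1 : 0 < k * (y - a) := mul_pos hkpos (by linarith)
    have h2 : k * (y - a) < k * (b - a) := by
      apply mul_lt_mul_of_pos_left _ hkpos
      linarith
    have h3 : k * (b - a) = π := by
      rw [hk, div_mul_cancel₀ _ (sub_ne_zero.2 hab.ne')]
    constructor
    · simp only [hα]; linarith
    · simp only [hα]; linarith
  set ψ : ℝ → ℝ := fun x => Real.tan (α (ψ0 x)) with hψdef
  have hαstrict : StrictMono α := by
    intro u v huv
    simp only [hα]
    have := mul_lt_mul_of_pos_left (show u - a < v - a by linarith) hkpos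
    linarith
  have hcosne : ∀ x : ℝ, Real.cos (α (ψ0 x)) ≠ 0 := fun x =>
    (Real.cos_pos_of_mem_Ioo (hαmem _ (hmem0 x))).ne'
  have hψinj : Function.Injective ψ := by
    intro x1 x2 h
    have h1 := Real.injOn_tan (hαmem _ (hmem0 x1)) (hαmem _ (hmem0 x2)) h
    exact hψ0strict.injective (hαstrict.injective h1)
  have hψsurj : Function.Surjective ψ := by
    intro u
    set v := Real.arctan u with hv
    have hv1 : -(π/2) < v := Real.neg_pi_div_two_lt_arctan u
    have hv2 : v < π/2 := Real.arctan_lt_pi_div_two u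
    set y := a + (v + π/2)/k with hy
    have hy1 : a < y := by
      rw [hy]
      have : 0 < (v + π/2)/k := div_pos (by linarith) hkpos
      linarith
    have hy2 : y < b := by
      have h4 : (v + π/2)/k < b - a := by
        rw [div_lt_iff₀ hkpos]
        have h3 : k * (b - a) = π := by
          rw [hk, div_mul_cancel₀ _ (sub_ne_zero.2 hab.ne')]
        nlinarith
      rw [hy]
      linarith
    have hymem : y ∈ Set.range ψ0 := by rw [hrange]; exact ⟨hy1, hy2⟩
    obtain ⟨x, hx⟩ := hymem
    refine ⟨x, ?_⟩
    have hαy : α y = v := by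
      rw [hα, hy]
      simp only
      rw [show a + (v + π/2)/k - a = (v + π/2)/k by ring]
      rw [mul_comm, div_mul_cancel₀ _ hkpos.ne']
      ring
    show Real.tan (α (ψ0 x)) = u
    rw [hx, hαy, hv, Real.tan_arctan]
  -- smoothness of ψ in charts
  have hsm : ∀ i, ContDiff ℝ r (ψ ∘ A.chart i) := by
    intro i
    rw [contDiff_iff_contDiffAt]
    intro s
    have hαc : ContDiff ℝ r α :=
      (contDiff_const.mul (contDiff_id.sub contDiff_const)).sub contDiff_const
    have h1 : ContDiffAt ℝ r (ψ0 ∘ A.chart i) s := (hψ0smooth i).contDiffAt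
    have h2 : ContDiffAt ℝ r (α ∘ (ψ0 ∘ A.chart i)) s := (hαc.contDiffAt).comp s h1
    have h3 : ContDiffAt ℝ r Real.tan (α (ψ0 (A.chart i s))) :=
      Real.contDiffAt_tan.2 (hcosne (A.chart i s))
    exact h3.comp (f := α ∘ (ψ0 ∘ A.chart i)) s h2
  refine ⟨ψ, ⟨hψinj, hψsurj⟩, hsm, ?_⟩
  intro i
  have hFd : ∀ s, deriv (ψ ∘ A.chart i) s ≠ 0 := by
    intro s
    have hg0d : HasDerivAt (ψ0 ∘ A.chart i) (deriv (ψ0 ∘ A.chart i) s) s :=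
      (((hψ0smooth i).differentiable (zero_lt_one.trans_le hr1).ne') s).hasDerivAt
    have hαd : HasDerivAt α (k * 1) ((ψ0 ∘ A.chart i) s) :=
      (((hasDerivAt_id ((ψ0 ∘ A.chart i) s)).sub_const a).const_mul k).sub_const (π/2)
    have htand : HasDerivAt Real.tan (1 / Real.cos (α ((ψ0 ∘ A.chart i) s)) ^ 2)
        (α ((ψ0 ∘ A.chart i) s)) := Real.hasDerivAt_tan (hcosne (A.chart i s))
    have hchain := (htand.comp s (hαd.comp s hg0d))
    have hde : deriv (ψ ∘ A.chart i) s
        = 1 / Real.cos (α ((ψ0 ∘ A.chart i) s)) ^ 2 * (k * 1 * deriv (ψ0 ∘ A.chart i) s) :=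
      hchain.deriv
    rw [hde]
    refine mul_ne_zero (one_div_ne_zero (pow_ne_zero 2 (hcosne _)))
      (mul_ne_zero (by simpa using hkpos.ne') (hψ0deriv i s))
  obtain ⟨hFinj, hFinv⟩ := invFun_contDiffOn hr (hsm i) hFd
  have hset : ψ '' Set.range (A.chart i) = Set.range (ψ ∘ A.chart i) :=
    (Set.range_comp ψ (A.chart i)).symm
  rw [hset]
  refine hFinv.congr ?_
  rintro _ ⟨s, rfl⟩
  show Function.invFun (A.chart i) (Function.invFun ψ ((ψ ∘ A.chart i) s))
      = Function.invFun (ψ ∘ A.chart i) ((ψ ∘ A.chart i) s)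
  rw [Function.leftInverse_invFun hFinj]
  have h1 : Function.invFun ψ (ψ (A.chart i s)) = A.chart i s :=
    Function.leftInverse_invFun hψinj _
  rw [show (ψ ∘ A.chart i) s = ψ (A.chart i s) from rfl, h1]
  exact Function.leftInverse_invFun (chart_inj A i) s
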